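/- arXiv:2309.05143 — 2 statements merged into one kernel-verified Lean document; each statement's English description precedes it below -/
import Mathlib

section
/- Let x be a nonzero vector with ρ := f(x) satisfying λ₁ ≤ ρ < (λ₁+λ₂)/2. Then every nonzero vector v with vᵀM x = 0 satisfies λ₁ + λ₂ − ρ ≤ f(v) ≤ λₙ. -/
open Matrix Finset

section aux
variable {m : ℕ}

private lemma sum_dot (f : Fin m → (Fin m → ℝ)) (w : Fin m → ℝ) :
    (∑ i, f i) ⬝ᵥ w = ∑ i, f i ⬝ᵥ w := by
  simp only [dotProduct, Finset.sum_mul, Finset.sum_apply]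
  rw [Finset.sum_comm]

private lemma dot_sum (w : Fin m → ℝ) (f : Fin m → (Fin m → ℝ)) :
    w ⬝ᵥ (∑ i, f i) = ∑ i, w ⬝ᵥ f i := by
  simp only [dotProduct, Finset.mul_sum, Finset.sum_apply]
  rw [Finset.sum_comm]

private lemma mulVec_sum' (M : Matrix (Fin m) (Fin m) ℝ) (f : Fin m → (Fin m → ℝ)) :
    M *ᵥ (∑ i, f i) = ∑ i, M *ᵥ f i := by
  simp only [← Matrix.mulVecLin_apply]
  exact map_sum M.mulVecLin f Finset.univ

private lemma sym_dot {M : Matrix (Fin m) (Fin m) ℝ} (hM : Mᵀ = M)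
    (z w : Fin m → ℝ) : z ⬝ᵥ M *ᵥ w = w ⬝ᵥ M *ᵥ z := by
  rw [dotProduct_mulVec]
  nth_rewrite 1 [← hM]
  rw [vecMul_transpose, dotProduct_comm]

end aux

/-- Rayleigh quotient bounds on the M-orthogonal complement of a good vector. -/
theorem statement_4 {n : ℕ}
    (A M : Matrix (Fin (n+2)) (Fin (n+2)) ℝ)
    (hA : A.PosDef) (hM : M.PosDef)
    (lam : Fin (n+2) → ℝ) (u : Fin (n+2) → (Fin (n+2) → ℝ))
    (hlam_pos : 0 < lam 0) (hgap : lam 0 < lam 1) (hmono : Monotone lam)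
    (heig : ∀ i, A *ᵥ u i = lam i • (M *ᵥ u i))
    (horth : ∀ i j, u i ⬝ᵥ M *ᵥ u j = if i = j then 1 else 0)
    (x : Fin (n+2) → ℝ) (hx : x ≠ 0)
    (ρ : ℝ) (hρdef : ρ = (x ⬝ᵥ A *ᵥ x) / (x ⬝ᵥ M *ᵥ x))
    (hρ1 : lam 0 ≤ ρ) (hρ2 : ρ < (lam 0 + lam 1) / 2)
    (v : Fin (n+2) → ℝ) (hv : v ≠ 0) (hvx : v ⬝ᵥ M *ᵥ x = 0) :
    lam 0 + lam 1 - ρ ≤ (v ⬝ᵥ A *ᵥ v) / (v ⬝ᵥ M *ᵥ v) ∧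
      (v ⬝ᵥ A *ᵥ v) / (v ⬝ᵥ M *ᵥ v) ≤ lam (Fin.last (n+1)) := by
  have hMsym : Mᵀ = M := by
    have := hM.1
    rwa [Matrix.IsHermitian, conjTranspose_eq_transpose_of_trivial] at this
  -- linear independence of u
  have hli : LinearIndependent ℝ u := by
    rw [Fintype.linearIndependent_iff]
    intro g hg j
    have h1 : (∑ i, g i • u i) ⬝ᵥ M *ᵥ u j = g j := by
      rw [sum_dot]
      simp only [smul_dotProduct, horth, smul_eq_mul, mul_ite, mul_one, mul_zero]
      simp
    rw [hg] at h1
    simpa using h1.symm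
  obtain ⟨hb, hbu⟩ : ∃ b : Module.Basis (Fin (n+2)) ℝ (Fin (n+2) → ℝ), ⇑b = u :=
    ⟨basisOfLinearIndependentOfCardEqFinrank hli (by simp [Module.finrank_fin_fun]),
      coe_basisOfLinearIndependentOfCardEqFinrank _ _⟩
  -- expansion of any vector
  have hexp : ∀ z : Fin (n+2) → ℝ, z = ∑ i, (u i ⬝ᵥ M *ᵥ z) • u i := by
    intro z
    have hrepr : z = ∑ i, (hb.repr z i) • u i := by
      conv_lhs => rw [← hb.sum_repr z]
      refine Finset.sum_congr rfl fun i _ => ?_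
      rw [hbu]
    have hco : ∀ j, u j ⬝ᵥ M *ᵥ z = hb.repr z j := by
      intro j
      conv_lhs => rw [hrepr]
      rw [sym_dot hMsym]
      rw [show (∑ i, (hb.repr z i) • u i) ⬝ᵥ M *ᵥ u j
          = ∑ i, (hb.repr z i) • u i ⬝ᵥ M *ᵥ u j from sum_dot _ _]
      simp only [smul_dotProduct, horth, smul_eq_mul, mul_ite, mul_one, mul_zero]
      simp
    conv_lhs => rw [hrepr]
    exact Finset.sum_congr rfl fun i _ => by rw [hco]
  -- coordinates
  set a : Fin (n+2) → ℝ := fun i => u i ⬝ᵥ M *ᵥ x with ha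
  set d : Fin (n+2) → ℝ := fun i => u i ⬝ᵥ M *ᵥ v with hd
  have hxa : x = ∑ i, a i • u i := hexp x
  have hvd : v = ∑ i, d i • u i := hexp v
  -- quadratic forms
  have hMform : ∀ (z : Fin (n+2) → ℝ) (c : Fin (n+2) → ℝ), z = ∑ i, c i • u i →
      ∀ w, z ⬝ᵥ M *ᵥ w = ∑ i, c i * (u i ⬝ᵥ M *ᵥ w) := by
    intro z c hz w
    conv_lhs => rw [hz]
    rw [sum_dot]
    exact Finset.sum_congr rfl fun i _ => by rw [smul_dotProduct]; rfl
  have hS : x ⬝ᵥ M *ᵥ x = ∑ i, a i ^ 2 := by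
    rw [hMform x a hxa x]
    exact Finset.sum_congr rfl fun i _ => by rw [sq]
  have hT : v ⬝ᵥ M *ᵥ v = ∑ i, d i ^ 2 := by
    rw [hMform v d hvd v]
    exact Finset.sum_congr rfl fun i _ => by rw [sq]
  have hO : (∑ i, a i * d i) = 0 := by
    rw [← hMform x a hxa v, sym_dot hMsym]
    exact hvx
  have hAform : ∀ (z : Fin (n+2) → ℝ) (c : Fin (n+2) → ℝ), z = ∑ i, c i • u i →
      z ⬝ᵥ A *ᵥ z = ∑ i, lam i * c i ^ 2 := by
    intro z c hz
    have h1 : A *ᵥ z = ∑ i, (c i * lam i) • (M *ᵥ u i) := by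
      conv_lhs => rw [hz, mulVec_sum' A]
      refine Finset.sum_congr rfl fun i _ => ?_
      rw [mulVec_smul, heig i, smul_smul]
    rw [h1, dot_sum]
    refine Finset.sum_congr rfl fun i _ => ?_
    rw [dotProduct_smul, smul_eq_mul, sym_dot hMsym]
    have h2 : u i ⬝ᵥ M *ᵥ z = c i := by
      rw [sym_dot hMsym, hMform z c hz (u i)]
      simp only [horth, mul_ite, mul_one, mul_zero]
      simp
    rw [h2]; ring
  have hP : x ⬝ᵥ A *ᵥ x = ∑ i, lam i * a i ^ 2 := hAform x a hxa
  have hQ : v ⬝ᵥ A *ᵥ v = ∑ i, lam i * d i ^ 2 := hAform v d hvd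
  -- positivity
  have hSpos : 0 < x ⬝ᵥ M *ᵥ x := by simpa using hM.dotProduct_mulVec_pos hx
  have hTpos : 0 < v ⬝ᵥ M *ᵥ v := by simpa using hM.dotProduct_mulVec_pos hv
  set S : ℝ := ∑ i, a i ^ 2 with hSdef
  set T : ℝ := ∑ i, d i ^ 2 with hTdef
  set P : ℝ := ∑ i, lam i * a i ^ 2 with hPdef
  set Q : ℝ := ∑ i, lam i * d i ^ 2 with hQdef
  rw [hS] at hSpos
  rw [hT] at hTpos
  constructor
  · -- lower bound
    set S' : ℝ := ∑ i : Fin (n+1), a i.succ ^ 2 with hS'def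
    set T' : ℝ := ∑ i : Fin (n+1), d i.succ ^ 2 with hT'def
    have hSsplit : S = a 0 ^ 2 + S' := by rw [hSdef, Fin.sum_univ_succ]
    have hTsplit : T = d 0 ^ 2 + T' := by rw [hTdef, Fin.sum_univ_succ]
    have hS'nn : 0 ≤ S' := Finset.sum_nonneg fun i _ => sq_nonneg _
    have hT'nn : 0 ≤ T' := Finset.sum_nonneg fun i _ => sq_nonneg _
    have hsucc_ge : ∀ i : Fin (n+1), lam 1 ≤ lam i.succ := by
      intro i
      apply hmono
      rw [Fin.le_def]
      simp [Fin.val_one]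
    have hE : lam 0 * S + (lam 1 - lam 0) * S' ≤ P := by
      rw [hPdef, Fin.sum_univ_succ, hSsplit]
      have h2 : lam 1 * S' ≤ ∑ i : Fin (n+1), lam i.succ * a i.succ ^ 2 := by
        rw [hS'def, Finset.mul_sum]
        exact Finset.sum_le_sum fun i _ =>
          mul_le_mul_of_nonneg_right (hsucc_ge i) (sq_nonneg _)
      linarith [h2]
    have hQlb : lam 0 * d 0 ^ 2 + lam 1 * T' ≤ Q := by
      rw [hQdef, Fin.sum_univ_succ]
      have h2 : lam 1 * T' ≤ ∑ i : Fin (n+1), lam i.succ * d i.succ ^ 2 := by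
        rw [hT'def, Finset.mul_sum]
        exact Finset.sum_le_sum fun i _ =>
          mul_le_mul_of_nonneg_right (hsucc_ge i) (sq_nonneg _)
      linarith
    have hCS : (a 0 * d 0) ^ 2 ≤ S' * T' := by
      have h0 : a 0 * d 0 = -(∑ i : Fin (n+1), a i.succ * d i.succ) := by
        have h00 := hO
        rw [Fin.sum_univ_succ] at h00
        linarith
      rw [h0, neg_sq]
      exact Finset.sum_mul_sq_le_sq_mul_sq _ _ _
    have hg : 0 < lam 1 - lam 0 := by linarith
    have hkey : (lam 1 - lam 0) * S * d 0 ^ 2 ≤ (P - lam 0 * S) * T := by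
      have h2 : (lam 1 - lam 0) * (a 0 ^ 2 * d 0 ^ 2) ≤ (lam 1 - lam 0) * (S' * T') := by
        apply mul_le_mul_of_nonneg_left _ hg.le
        calc a 0 ^ 2 * d 0 ^ 2 = (a 0 * d 0) ^ 2 := by ring
          _ ≤ S' * T' := hCS
      have h3 : (lam 1 - lam 0) * S' ≤ P - lam 0 * S := by linarith
      have h5 : ((lam 1 - lam 0) * S') * T ≤ (P - lam 0 * S) * T :=
        mul_le_mul_of_nonneg_right h3 (by linarith [sq_nonneg (d 0), hT'nn])
      calc (lam 1 - lam 0) * S * d 0 ^ 2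
          = (lam 1 - lam 0) * (a 0 ^ 2 * d 0 ^ 2) + (lam 1 - lam 0) * S' * d 0 ^ 2 := by
            rw [hSsplit]; ring
        _ ≤ (lam 1 - lam 0) * (S' * T') + (lam 1 - lam 0) * S' * d 0 ^ 2 := by linarith
        _ = ((lam 1 - lam 0) * S') * T := by rw [hTsplit]; ring
        _ ≤ (P - lam 0 * S) * T := h5
    have step3 : lam 1 * T - Q ≤ (lam 1 - lam 0) * d 0 ^ 2 := by
      rw [hTsplit]; ring_nf; nlinarith [hQlb, hTsplit]
    have h6 : (lam 1 * T - Q) * S ≤ (P - lam 0 * S) * T := by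
      calc (lam 1 * T - Q) * S ≤ ((lam 1 - lam 0) * d 0 ^ 2) * S :=
            mul_le_mul_of_nonneg_right step3 hSpos.le
        _ = (lam 1 - lam 0) * S * d 0 ^ 2 := by ring
        _ ≤ (P - lam 0 * S) * T := hkey
    rw [hρdef, hS, hP, hT, hQ]
    have h7 : lam 0 + lam 1 - P / S = ((lam 0 + lam 1) * S - P) / S := by
      rw [sub_div, mul_div_cancel_right₀ _ (ne_of_gt hSpos)]
    rw [h7, div_le_div_iff₀ hSpos hTpos]
    linarith [h6]
  · -- upper bound
    rw [hT, hQ, div_le_iff₀ hTpos]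
    rw [hQdef, hTdef, Finset.mul_sum]
    exact Finset.sum_le_sum fun i _ =>
      mul_le_mul_of_nonneg_right (hmono (Fin.le_last i)) (sq_nonneg _)
end

section
/- Suppose λ₁ ≤ ρ* < (λ₁+λ₂)/2. Let u₁ be the eigenvector of the pencil (A,M) for λ₁ normalized so that ‖u₁‖_A = 1, and set ν₁ = u₁ᵀA B⁻¹A u₁ / (u₁ᵀA u₁). Then for every nonzero x with f(x) ≤ ρ* and every nonzero v with vᵀB x = 0, |vᵀA x|/(‖v‖_A·‖x‖_A) ≤ ‖B⁻¹A u₁ − ν₁ u₁‖_A/ν_min + (ν₁/ν_min + √κ_ν)·√((λ₁⁻¹ − ρ*⁻¹)/(λ₁⁻¹ − λ₂⁻¹)). -/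
set_option maxHeartbeats 1000000


open Matrix

lemma dot_symm' {m : ℕ} (S : Matrix (Fin m) (Fin m) ℝ) (hS : Sᵀ = S) (v w : Fin m → ℝ) :
    v ⬝ᵥ S *ᵥ w = w ⬝ᵥ S *ᵥ v := by
  conv_lhs => rw [← hS]
  rw [dotProduct_mulVec, vecMul_transpose, dotProduct_comm]

lemma cs_psd' {m : ℕ} {S : Matrix (Fin m) (Fin m) ℝ} (hS : S.PosSemidef) (v w : Fin m → ℝ) :
    (v ⬝ᵥ S *ᵥ w)^2 ≤ (v ⬝ᵥ S *ᵥ v) * (w ⬝ᵥ S *ᵥ w) := by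
  have hsym : Sᵀ = S := hS.1
  have key : ∀ t : ℝ, 0 ≤ (w ⬝ᵥ S *ᵥ w) * (t*t) + (2 * (v ⬝ᵥ S *ᵥ w)) * t + (v ⬝ᵥ S *ᵥ v) := by
    intro t
    have h0 := hS.dotProduct_mulVec_nonneg (v + t • w)
    simp only [star_trivial] at h0
    have hexp : (v + t • w) ⬝ᵥ S *ᵥ (v + t • w)
        = (w ⬝ᵥ S *ᵥ w) * (t*t) + (2 * (v ⬝ᵥ S *ᵥ w)) * t + (v ⬝ᵥ S *ᵥ v) := by
      rw [mulVec_add, mulVec_smul, dotProduct_add, add_dotProduct, add_dotProduct,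
        smul_dotProduct, smul_dotProduct, dotProduct_smul, dot_symm' S hsym w v]
      simp [smul_eq_mul]; ring
    linarith [hexp ▸ h0]
  have := discrim_le_zero key
  rw [discrim] at this
  nlinarith [this]

lemma sandwich' {m : ℕ} (u : Fin m → Fin m → ℝ) (S : Matrix (Fin m) (Fin m) ℝ) (i j : Fin m) :
    (of u * S * (of u)ᵀ) i j = u i ⬝ᵥ S *ᵥ u j := by
  simp only [Matrix.mul_apply, Matrix.transpose_apply, Matrix.of_apply, mulVec, dotProduct,
    Finset.sum_mul, Finset.mul_sum]
  rw [Finset.sum_comm]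
  exact Finset.sum_congr rfl fun k _ => Finset.sum_congr rfl fun l _ => by ring


lemma bBound' {m : ℕ} {Bm Am : Matrix (Fin m) (Fin m) ℝ} (hB : Bm.PosSemidef) {νmin : ℝ}
    (hνmin : 0 < νmin) (hbd : ∀ z, νmin * (z ⬝ᵥ Bm *ᵥ z) ≤ z ⬝ᵥ Am *ᵥ z)
    (y z : Fin m → ℝ) :
    |y ⬝ᵥ Bm *ᵥ z| ≤ Real.sqrt (y ⬝ᵥ Am *ᵥ y) * Real.sqrt (z ⬝ᵥ Am *ᵥ z) / νmin := by
  have h6 := cs_psd' hB y z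
  have hyB : 0 ≤ y ⬝ᵥ Bm *ᵥ y := by simpa using hB.dotProduct_mulVec_nonneg y
  have hzB : 0 ≤ z ⬝ᵥ Bm *ᵥ z := by simpa using hB.dotProduct_mulVec_nonneg z
  have hyA := hbd y
  have hzA := hbd z
  have hyAnn : 0 ≤ y ⬝ᵥ Am *ᵥ y := le_trans (mul_nonneg hνmin.le hyB) hyA
  have hzAnn : 0 ≤ z ⬝ᵥ Am *ᵥ z := le_trans (mul_nonneg hνmin.le hzB) hzA
  have h7 : (y ⬝ᵥ Bm *ᵥ z)^2 ≤ (y ⬝ᵥ Am *ᵥ y) * (z ⬝ᵥ Am *ᵥ z) / νmin^2 := by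
    rw [le_div_iff₀ (by positivity)]
    have p1 : (y ⬝ᵥ Bm *ᵥ z)^2 * νmin^2 ≤ (y ⬝ᵥ Bm *ᵥ y) * (z ⬝ᵥ Bm *ᵥ z) * νmin^2 :=
      mul_le_mul_of_nonneg_right h6 (sq_nonneg νmin)
    have p2 : (νmin * (y ⬝ᵥ Bm *ᵥ y)) * (νmin * (z ⬝ᵥ Bm *ᵥ z)) ≤
        (y ⬝ᵥ Am *ᵥ y) * (z ⬝ᵥ Am *ᵥ z) :=
      mul_le_mul hyA hzA (mul_nonneg hνmin.le hzB) hyAnn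
    nlinarith [p1, p2]
  calc |y ⬝ᵥ Bm *ᵥ z| = Real.sqrt ((y ⬝ᵥ Bm *ᵥ z)^2) := (Real.sqrt_sq_eq_abs _).symm
    _ ≤ Real.sqrt ((y ⬝ᵥ Am *ᵥ y) * (z ⬝ᵥ Am *ᵥ z) / νmin^2) := Real.sqrt_le_sqrt h7
    _ = Real.sqrt (y ⬝ᵥ Am *ᵥ y) * Real.sqrt (z ⬝ᵥ Am *ᵥ z) / νmin := by
        rw [Real.sqrt_div (mul_nonneg hyAnn hzAnn), Real.sqrt_mul hyAnn,
          Real.sqrt_sq hνmin.le]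

/-- Decomposition bound for the leading angle. -/
theorem statement_9 {n : ℕ}
    (A M B : Matrix (Fin (n+2)) (Fin (n+2)) ℝ)
    (hA : A.PosDef) (hM : M.PosDef) (hB : B.PosDef)
    (lam : Fin (n+2) → ℝ) (u : Fin (n+2) → (Fin (n+2) → ℝ))
    (hlam_pos : 0 < lam 0) (hgap : lam 0 < lam 1) (hmono : Monotone lam)
    (heig : ∀ i, A *ᵥ u i = lam i • (M *ᵥ u i))
    (horth : ∀ i j, u i ⬝ᵥ M *ᵥ u j = if i = j then 1 else 0)
    (νmin νmax : ℝ) (hνmin : 0 < νmin) (hνmax : 0 < νmax)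
    (hν : ∀ z, νmin * (z ⬝ᵥ B *ᵥ z) ≤ z ⬝ᵥ A *ᵥ z ∧ z ⬝ᵥ A *ᵥ z ≤ νmax * (z ⬝ᵥ B *ᵥ z))
    (ρstar : ℝ) (hρ1 : lam 0 ≤ ρstar) (hρ2 : ρstar < (lam 0 + lam 1) / 2)
    (u₁ : Fin (n+2) → ℝ)
    (heig₁ : A *ᵥ u₁ = lam 0 • (M *ᵥ u₁)) (hu₁A : u₁ ⬝ᵥ A *ᵥ u₁ = 1)
    (ν₁ : ℝ) (hν₁ : ν₁ = (u₁ ⬝ᵥ (A * B⁻¹ * A) *ᵥ u₁) / (u₁ ⬝ᵥ A *ᵥ u₁))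
    (x : Fin (n+2) → ℝ) (hx : x ≠ 0)
    (hfx : (x ⬝ᵥ A *ᵥ x) / (x ⬝ᵥ M *ᵥ x) ≤ ρstar)
    (v : Fin (n+2) → ℝ) (hv : v ≠ 0) (hvBx : v ⬝ᵥ B *ᵥ x = 0) :
    |v ⬝ᵥ A *ᵥ x| / (Real.sqrt (v ⬝ᵥ A *ᵥ v) * Real.sqrt (x ⬝ᵥ A *ᵥ x)) ≤
      Real.sqrt ((B⁻¹ *ᵥ (A *ᵥ u₁) - ν₁ • u₁) ⬝ᵥ A *ᵥ (B⁻¹ *ᵥ (A *ᵥ u₁) - ν₁ • u₁)) / νmin +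
        (ν₁ / νmin + Real.sqrt (νmax / νmin)) *
          Real.sqrt (((lam 0)⁻¹ - ρstar⁻¹) / ((lam 0)⁻¹ - (lam 1)⁻¹)) := by
  have hMsymm : Mᵀ = M := hM.isHermitian.eq
  have hAsymm : Aᵀ = A := hA.isHermitian.eq
  have hApsd := hA.posSemidef
  have hBpsd := hB.posSemidef
  set U : Matrix (Fin (n+2)) (Fin (n+2)) ℝ := of u with hUdef
  have h1 : U * M * Uᵀ = 1 := by
    ext i j; rw [sandwich', horth, Matrix.one_apply]
  have hD : U * A * Uᵀ = diagonal lam := by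
    ext i j
    rw [sandwich', heig j, dotProduct_smul, horth, Matrix.diagonal_apply]
    by_cases h : i = j <;> simp [h]
  have hUM1 : U * (M * Uᵀ) = 1 := by rw [← Matrix.mul_assoc]; exact h1
  have hMU_U : (M * Uᵀ) * U = 1 := mul_eq_one_comm.mp hUM1
  have hUt_UM : Uᵀ * (U * M) = 1 := by
    have h2 := congrArg Matrix.transpose hMU_U
    rwa [Matrix.transpose_mul, Matrix.transpose_mul, Matrix.transpose_transpose, hMsymm,
      Matrix.transpose_one] at h2
  have hAfac : A = (M * Uᵀ) * diagonal lam * (U * M) := by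
    rw [← hD]
    have : (M * Uᵀ) * (U * A * Uᵀ) * (U * M) = ((M * Uᵀ) * U) * (A * (Uᵀ * (U * M))) := by
      simp only [Matrix.mul_assoc]
    rw [this, hMU_U, hUt_UM, one_mul, mul_one]
  have hMfac : M = (M * Uᵀ) * (U * M) := by
    have : (M * Uᵀ) * (U * M) = M * (Uᵀ * (U * M)) := by simp only [Matrix.mul_assoc]
    rw [this, hUt_UM, mul_one]
  have hMU_t : M * Uᵀ = (U * M)ᵀ := by rw [Matrix.transpose_mul, hMsymm]
  have hcoef : ∀ (z : Fin (n+2) → ℝ) (i : Fin (n+2)), ((U * M) *ᵥ z) i = u i ⬝ᵥ M *ᵥ z := by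
    intro z i
    rw [← Matrix.mulVec_mulVec]
    rfl
  have hAy : ∀ y : Fin (n+2) → ℝ, y ⬝ᵥ A *ᵥ y = ∑ i, lam i * (u i ⬝ᵥ M *ᵥ y)^2 := by
    intro y
    conv_lhs => rw [hAfac]
    rw [← Matrix.mulVec_mulVec, ← Matrix.mulVec_mulVec, dotProduct_mulVec, hMU_t,
      Matrix.vecMul_transpose]
    simp only [dotProduct, Matrix.mulVec_diagonal, hcoef]
    exact Finset.sum_congr rfl fun i _ => by ring
  have hMy : ∀ y : Fin (n+2) → ℝ, y ⬝ᵥ M *ᵥ y = ∑ i, (u i ⬝ᵥ M *ᵥ y)^2 := by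
    intro y
    conv_lhs => rw [hMfac]
    rw [← Matrix.mulVec_mulVec, dotProduct_mulVec, hMU_t, Matrix.vecMul_transpose]
    simp only [dotProduct, hcoef]
    exact Finset.sum_congr rfl fun i _ => by ring
  have hrec : ∀ y : Fin (n+2) → ℝ, y = fun j => ∑ i, (u i ⬝ᵥ M *ᵥ y) * u i j := by
    intro y
    have h3 : Uᵀ *ᵥ ((U * M) *ᵥ y) = y := by
      rw [Matrix.mulVec_mulVec, hUt_UM, Matrix.one_mulVec]
    funext j
    conv_lhs => rw [← h3]
    have h4 : ∀ (c : Fin (n+2) → ℝ), (Uᵀ *ᵥ c) j = ∑ i, u i j * c i := fun c => by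
      simp [Matrix.mulVec, dotProduct, Matrix.transpose_apply]
      rfl
    rw [h4]
    exact Finset.sum_congr rfl fun i _ => by rw [hcoef]; ring
  -- basic positivity
  have hSM : 0 < x ⬝ᵥ M *ᵥ x := by simpa using hM.dotProduct_mulVec_pos hx
  have hSA : 0 < x ⬝ᵥ A *ᵥ x := by simpa using hA.dotProduct_mulVec_pos hx
  have hvAv : 0 < v ⬝ᵥ A *ᵥ v := by simpa using hA.dotProduct_mulVec_pos hv
  -- decomposition of x
  set c0 : ℝ := u 0 ⬝ᵥ M *ᵥ x with hc0def
  set w : Fin (n+2) → ℝ := x - c0 • u 0 with hwdef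
  have hu0Mu0 : u 0 ⬝ᵥ M *ᵥ u 0 = 1 := by simpa using horth 0 0
  have hu0Au0 : u 0 ⬝ᵥ A *ᵥ u 0 = lam 0 := by
    rw [heig 0, dotProduct_smul, hu0Mu0, smul_eq_mul, mul_one]
  have hxMu0 : x ⬝ᵥ M *ᵥ u 0 = c0 := by rw [dot_symm' M hMsymm]
  have hxAu0 : x ⬝ᵥ A *ᵥ u 0 = lam 0 * c0 := by
    rw [heig 0, dotProduct_smul, hxMu0, smul_eq_mul]
  have hu0Ax : u 0 ⬝ᵥ A *ᵥ x = lam 0 * c0 := by rw [dot_symm' A hAsymm, hxAu0]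
  have hwAw : w ⬝ᵥ A *ᵥ w = x ⬝ᵥ A *ᵥ x - lam 0 * c0^2 := by
    rw [hwdef]
    simp only [mulVec_sub, mulVec_smul, dotProduct_sub, sub_dotProduct, dotProduct_smul,
      smul_dotProduct, smul_eq_mul, hxAu0, hu0Ax, hu0Au0]
    ring
  have hwMw : w ⬝ᵥ M *ᵥ w = x ⬝ᵥ M *ᵥ x - c0^2 := by
    rw [hwdef]
    simp only [mulVec_sub, mulVec_smul, dotProduct_sub, sub_dotProduct, dotProduct_smul,
      smul_dotProduct, smul_eq_mul, hxMu0, hu0Mu0, ← hc0def]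
    ring
  have hwcoef0 : u 0 ⬝ᵥ M *ᵥ w = 0 := by
    rw [hwdef]
    simp only [mulVec_sub, mulVec_smul, dotProduct_sub, dotProduct_smul, smul_eq_mul,
      hu0Mu0, ← hc0def]
    ring
  have hone_le : ∀ i : Fin (n+2), i ≠ 0 → (1 : Fin (n+2)) ≤ i := by
    intro i hi
    have hpos : (0 : Fin (n+2)) < i := Fin.pos_of_ne_zero hi
    rw [Fin.le_def, Fin.val_one]
    rw [Fin.lt_def, Fin.val_zero] at hpos
    omega
  have hgapw : lam 1 * (w ⬝ᵥ M *ᵥ w) ≤ w ⬝ᵥ A *ᵥ w := by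
    rw [hAy w, hMy w, Finset.mul_sum]
    apply Finset.sum_le_sum
    intro i _
    by_cases hi : i = 0
    · subst hi; rw [hwcoef0]; simp
    · have h1i : lam 1 ≤ lam i := hmono (hone_le i hi)
      nlinarith [sq_nonneg (u i ⬝ᵥ M *ᵥ w)]
  -- u₁ is proportional to u 0
  set β : ℝ := u 0 ⬝ᵥ M *ᵥ u₁ with hβdef
  have hei : ∀ i : Fin (n+2), i ≠ 0 → u i ⬝ᵥ M *ᵥ u₁ = 0 := by
    intro i hi
    have w1 : u i ⬝ᵥ A *ᵥ u₁ = lam 0 * (u i ⬝ᵥ M *ᵥ u₁) := by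
      rw [heig₁, dotProduct_smul, smul_eq_mul]
    have w2 : u i ⬝ᵥ A *ᵥ u₁ = lam i * (u i ⬝ᵥ M *ᵥ u₁) := by
      rw [dot_symm' A hAsymm, heig i, dotProduct_smul, smul_eq_mul,
        dot_symm' M hMsymm u₁ (u i)]
    have hlt : lam 0 < lam i := lt_of_lt_of_le hgap (hmono (hone_le i hi))
    have h5 : (lam i - lam 0) * (u i ⬝ᵥ M *ᵥ u₁) = 0 := by linarith [w1 ▸ w2]
    rcases mul_eq_zero.mp h5 with h | h
    · exact absurd h (by linarith)
    · exact h
  have hu₁eq : u₁ = β • u 0 := by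
    have hr := hrec u₁
    funext j
    have hj : u₁ j = ∑ i, (u i ⬝ᵥ M *ᵥ u₁) * u i j := congrFun hr j
    rw [hj, Finset.sum_eq_single 0 (fun i _ hi => by rw [hei i hi, zero_mul]) (by simp)]
    simp [smul_eq_mul, hβdef]
  have hβsq : lam 0 * β^2 = 1 := by
    have h5 : (β • u 0) ⬝ᵥ A *ᵥ (β • u 0) = 1 := by rw [← hu₁eq]; exact hu₁A
    simp only [mulVec_smul, dotProduct_smul, smul_dotProduct, smul_eq_mul, hu0Au0] at h5
    nlinarith [h5]
  have hβne : β ≠ 0 := by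
    intro h
    rw [h] at hβsq
    simp at hβsq
  -- scalar inequalities for the angle
  have hρpos : 0 < ρstar := lt_of_lt_of_le hlam_pos hρ1
  have hρb : ρstar < lam 1 := by linarith
  have hxineq : x ⬝ᵥ A *ᵥ x ≤ ρstar * (x ⬝ᵥ M *ᵥ x) := by
    rw [div_le_iff₀ hSM] at hfx; linarith
  have hs_nonneg : 0 ≤ w ⬝ᵥ A *ᵥ w := by simpa using hApsd.dotProduct_mulVec_nonneg w
  have hb1 : 0 < lam 1 := lt_trans hlam_pos hgap
  have hxAx' : x ⬝ᵥ A *ᵥ x = w ⬝ᵥ A *ᵥ w + lam 0 * c0^2 := by linarith [hwAw]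
  have hxMx' : x ⬝ᵥ M *ᵥ x = w ⬝ᵥ M *ᵥ w + c0^2 := by linarith [hwMw]
  have hxineq' : w ⬝ᵥ A *ᵥ w + lam 0 * c0^2 ≤ ρstar * (w ⬝ᵥ M *ᵥ w + c0^2) := by
    rw [← hxAx', ← hxMx']; exact hxineq
  have h1' := mul_le_mul_of_nonneg_left hxineq' hb1.le
  have h2' := mul_le_mul_of_nonneg_left hgapw hρpos.le
  have step1 : (w ⬝ᵥ A *ᵥ w) * (lam 1 - ρstar) ≤ lam 1 * (ρstar - lam 0) * c0^2 := by
    nlinarith [h1', h2']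
  have h3' := mul_le_mul_of_nonneg_left step1 hlam_pos.le
  have step2 : (w ⬝ᵥ A *ᵥ w) * (ρstar * (lam 1 - lam 0)) ≤
      lam 1 * (ρstar - lam 0) * (x ⬝ᵥ A *ᵥ x) := by
    rw [hxAx']
    nlinarith [h3']
  have hτpos : 0 < ρstar * (lam 1 - lam 0) := mul_pos hρpos (by linarith)
  have hsin : w ⬝ᵥ A *ᵥ w ≤
      (lam 1 * (ρstar - lam 0) / (ρstar * (lam 1 - lam 0))) * (x ⬝ᵥ A *ᵥ x) := by
    rw [div_mul_eq_mul_div, le_div_iff₀ hτpos]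
    linarith [step2]
  have hinvpos : 0 < (lam 0)⁻¹ - (lam 1)⁻¹ := by
    rw [sub_pos]
    exact inv_strictAnti₀ hlam_pos hgap
  have hτeq : ((lam 0)⁻¹ - ρstar⁻¹) / ((lam 0)⁻¹ - (lam 1)⁻¹) =
      lam 1 * (ρstar - lam 0) / (ρstar * (lam 1 - lam 0)) := by
    rw [div_eq_div_iff hinvpos.ne' hτpos.ne']
    field_simp
  have hτnonneg : 0 ≤ lam 1 * (ρstar - lam 0) / (ρstar * (lam 1 - lam 0)) :=
    div_nonneg (mul_nonneg hb1.le (by linarith)) hτpos.le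
  have hWa : Real.sqrt (w ⬝ᵥ A *ᵥ w) ≤
      Real.sqrt (((lam 0)⁻¹ - ρstar⁻¹) / ((lam 0)⁻¹ - (lam 1)⁻¹)) *
        Real.sqrt (x ⬝ᵥ A *ᵥ x) := by
    rw [hτeq, ← Real.sqrt_mul hτnonneg]
    exact Real.sqrt_le_sqrt hsin
  -- B⁻¹ facts
  have hBdet : IsUnit B.det := hB.det_pos.ne'.isUnit
  have hBBinv : B * B⁻¹ = 1 := Matrix.mul_nonsing_inv B hBdet
  set r : Fin (n+2) → ℝ := B⁻¹ *ᵥ (A *ᵥ u₁) - ν₁ • u₁ with hrdef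
  have hBr : B *ᵥ r = A *ᵥ u₁ - ν₁ • (B *ᵥ u₁) := by
    rw [hrdef, mulVec_sub, mulVec_smul, Matrix.mulVec_mulVec, hBBinv, Matrix.one_mulVec]
  have hvecA : u₁ ᵥ* A = A *ᵥ u₁ := by
    conv_lhs => rw [← hAsymm]
    rw [Matrix.vecMul_transpose]
  have hν₁' : ν₁ = (A *ᵥ u₁) ⬝ᵥ B⁻¹ *ᵥ (A *ᵥ u₁) := by
    rw [hν₁, hu₁A, div_one, ← Matrix.mulVec_mulVec, ← Matrix.mulVec_mulVec,
      dotProduct_mulVec, hvecA]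
  have hν₁nonneg : 0 ≤ ν₁ := by
    rw [hν₁']
    simpa using hB.inv.posSemidef.dotProduct_mulVec_nonneg (A *ᵥ u₁)
  -- Cauchy-Schwarz bounds
  have hBbound : ∀ y z : Fin (n+2) → ℝ, |y ⬝ᵥ B *ᵥ z| ≤
      Real.sqrt (y ⬝ᵥ A *ᵥ y) * Real.sqrt (z ⬝ᵥ A *ᵥ z) / νmin :=
    bBound' hBpsd hνmin (fun z => (hν z).1)
  have hvAw : |v ⬝ᵥ A *ᵥ w| ≤
      Real.sqrt (v ⬝ᵥ A *ᵥ v) * Real.sqrt (w ⬝ᵥ A *ᵥ w) := by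
    have h6 := cs_psd' hApsd v w
    calc |v ⬝ᵥ A *ᵥ w| = Real.sqrt ((v ⬝ᵥ A *ᵥ w)^2) := (Real.sqrt_sq_eq_abs _).symm
      _ ≤ Real.sqrt ((v ⬝ᵥ A *ᵥ v) * (w ⬝ᵥ A *ᵥ w)) := Real.sqrt_le_sqrt h6
      _ = _ := Real.sqrt_mul hvAv.le _
  have hκ : (1:ℝ) ≤ Real.sqrt (νmax / νmin) := by
    have hvBv : 0 < v ⬝ᵥ B *ᵥ v := by simpa using hB.dotProduct_mulVec_pos hv
    have hle : νmin ≤ νmax :=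
      le_of_mul_le_mul_right (le_trans (hν v).1 (hν v).2) hvBv
    rw [show (1:ℝ) = Real.sqrt 1 from Real.sqrt_one.symm]
    exact Real.sqrt_le_sqrt ((one_le_div hνmin).mpr hle)
  -- key identity
  have hxw : x = w + c0 • u 0 := by rw [hwdef]; ring_nf
  have hvBw : v ⬝ᵥ B *ᵥ w = - (c0 * (v ⬝ᵥ B *ᵥ u 0)) := by
    have h8 : v ⬝ᵥ B *ᵥ x = v ⬝ᵥ B *ᵥ w + c0 * (v ⬝ᵥ B *ᵥ u 0) := by
      conv_lhs => rw [hxw]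
      simp only [mulVec_add, mulVec_smul, dotProduct_add, dotProduct_smul, smul_eq_mul]
    rw [hvBx] at h8
    linarith
  have hvBu₁ : v ⬝ᵥ B *ᵥ u₁ = β * (v ⬝ᵥ B *ᵥ u 0) := by
    rw [hu₁eq]
    simp only [mulVec_smul, dotProduct_smul, smul_eq_mul]
  have hvAu₁ : v ⬝ᵥ A *ᵥ u₁ = v ⬝ᵥ B *ᵥ r + ν₁ * (β * (v ⬝ᵥ B *ᵥ u 0)) := by
    have h7 : v ⬝ᵥ B *ᵥ r = v ⬝ᵥ A *ᵥ u₁ - ν₁ * (v ⬝ᵥ B *ᵥ u₁) := by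
      rw [hBr, dotProduct_sub, dotProduct_smul, smul_eq_mul]
    rw [hvBu₁] at h7
    linarith
  have hvAu0 : v ⬝ᵥ A *ᵥ u 0 = β⁻¹ * (v ⬝ᵥ A *ᵥ u₁) := by
    have h9 : u 0 = β⁻¹ • u₁ := by
      rw [hu₁eq, smul_smul, inv_mul_cancel₀ hβne, one_smul]
    conv_lhs => rw [h9]
    rw [mulVec_smul, dotProduct_smul, smul_eq_mul]
  have hkey : v ⬝ᵥ A *ᵥ x =
      (c0 * β⁻¹) * (v ⬝ᵥ B *ᵥ r) - ν₁ * (v ⬝ᵥ B *ᵥ w) + v ⬝ᵥ A *ᵥ w := by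
    conv_lhs => rw [hxw]
    rw [mulVec_add, dotProduct_add, mulVec_smul, dotProduct_smul, smul_eq_mul, hvAu0,
      hvAu₁, hvBw]
    field_simp
    ring
  -- bound for |c0 * β⁻¹|
  have hβinv : (β⁻¹)^2 = lam 0 := by
    have hβ2ne : β^2 ≠ 0 := pow_ne_zero 2 hβne
    field_simp
    linarith [hβsq]
  have hc0β : (c0 * β⁻¹)^2 ≤ x ⬝ᵥ A *ᵥ x := by
    have h9 : (c0 * β⁻¹)^2 = lam 0 * c0^2 := by rw [mul_pow, hβinv]; ring
    linarith [hs_nonneg, hwAw]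
  have habs : |c0 * β⁻¹| ≤ Real.sqrt (x ⬝ᵥ A *ᵥ x) := by
    rw [← Real.sqrt_sq_eq_abs]
    exact Real.sqrt_le_sqrt hc0β
  -- final assembly
  have hVa : 0 < Real.sqrt (v ⬝ᵥ A *ᵥ v) := Real.sqrt_pos.mpr hvAv
  have hXa : 0 < Real.sqrt (x ⬝ᵥ A *ᵥ x) := Real.sqrt_pos.mpr hSA
  rw [div_le_iff₀ (mul_pos hVa hXa)]
  have htri : |v ⬝ᵥ A *ᵥ x| ≤ |(c0 * β⁻¹) * (v ⬝ᵥ B *ᵥ r)| + ν₁ * |v ⬝ᵥ B *ᵥ w|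
      + |v ⬝ᵥ A *ᵥ w| := by
    rw [hkey, sub_eq_add_neg]
    have h10 := abs_add_three ((c0 * β⁻¹) * (v ⬝ᵥ B *ᵥ r)) (-(ν₁ * (v ⬝ᵥ B *ᵥ w)))
      (v ⬝ᵥ A *ᵥ w)
    rw [abs_neg, abs_mul ν₁, abs_of_nonneg hν₁nonneg] at h10
    exact h10
  have hT1 : |(c0 * β⁻¹) * (v ⬝ᵥ B *ᵥ r)| ≤ Real.sqrt (x ⬝ᵥ A *ᵥ x) *
      (Real.sqrt (v ⬝ᵥ A *ᵥ v) * Real.sqrt (r ⬝ᵥ A *ᵥ r) / νmin) := by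
    rw [abs_mul]
    exact mul_le_mul habs (hBbound v r) (abs_nonneg _) hXa.le
  set T : ℝ := Real.sqrt (((lam 0)⁻¹ - ρstar⁻¹) / ((lam 0)⁻¹ - (lam 1)⁻¹)) with hTdef
  have hT2 : ν₁ * |v ⬝ᵥ B *ᵥ w| ≤
      ν₁ / νmin * (Real.sqrt (v ⬝ᵥ A *ᵥ v) * (T * Real.sqrt (x ⬝ᵥ A *ᵥ x))) := by
    have h11 : ν₁ * |v ⬝ᵥ B *ᵥ w| ≤
        ν₁ * (Real.sqrt (v ⬝ᵥ A *ᵥ v) * Real.sqrt (w ⬝ᵥ A *ᵥ w) / νmin) :=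
      mul_le_mul_of_nonneg_left (hBbound v w) hν₁nonneg
    have h12 : Real.sqrt (v ⬝ᵥ A *ᵥ v) * Real.sqrt (w ⬝ᵥ A *ᵥ w) ≤
        Real.sqrt (v ⬝ᵥ A *ᵥ v) * (T * Real.sqrt (x ⬝ᵥ A *ᵥ x)) :=
      mul_le_mul_of_nonneg_left hWa (Real.sqrt_nonneg _)
    calc ν₁ * |v ⬝ᵥ B *ᵥ w| ≤
        ν₁ * (Real.sqrt (v ⬝ᵥ A *ᵥ v) * Real.sqrt (w ⬝ᵥ A *ᵥ w) / νmin) := h11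
      _ = ν₁ / νmin * (Real.sqrt (v ⬝ᵥ A *ᵥ v) * Real.sqrt (w ⬝ᵥ A *ᵥ w)) := by ring
      _ ≤ _ := mul_le_mul_of_nonneg_left h12 (div_nonneg hν₁nonneg hνmin.le)
  have hT3 : |v ⬝ᵥ A *ᵥ w| ≤ Real.sqrt (νmax / νmin) *
      (Real.sqrt (v ⬝ᵥ A *ᵥ v) * (T * Real.sqrt (x ⬝ᵥ A *ᵥ x))) := by
    calc |v ⬝ᵥ A *ᵥ w| ≤ Real.sqrt (v ⬝ᵥ A *ᵥ v) * Real.sqrt (w ⬝ᵥ A *ᵥ w) := hvAw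
      _ ≤ Real.sqrt (v ⬝ᵥ A *ᵥ v) * (T * Real.sqrt (x ⬝ᵥ A *ᵥ x)) :=
        mul_le_mul_of_nonneg_left hWa (Real.sqrt_nonneg _)
      _ = 1 * (Real.sqrt (v ⬝ᵥ A *ᵥ v) * (T * Real.sqrt (x ⬝ᵥ A *ᵥ x))) := (one_mul _).symm
      _ ≤ _ := by
        apply mul_le_mul_of_nonneg_right hκ
        positivity
  have heq : Real.sqrt (x ⬝ᵥ A *ᵥ x) *
        (Real.sqrt (v ⬝ᵥ A *ᵥ v) * Real.sqrt (r ⬝ᵥ A *ᵥ r) / νmin) +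
      ν₁ / νmin * (Real.sqrt (v ⬝ᵥ A *ᵥ v) * (T * Real.sqrt (x ⬝ᵥ A *ᵥ x))) +
      Real.sqrt (νmax / νmin) * (Real.sqrt (v ⬝ᵥ A *ᵥ v) * (T * Real.sqrt (x ⬝ᵥ A *ᵥ x))) =
      (Real.sqrt (r ⬝ᵥ A *ᵥ r) / νmin + (ν₁ / νmin + Real.sqrt (νmax / νmin)) * T) *
        (Real.sqrt (v ⬝ᵥ A *ᵥ v) * Real.sqrt (x ⬝ᵥ A *ᵥ x)) := by ring
  calc |v ⬝ᵥ A *ᵥ x| ≤ |(c0 * β⁻¹) * (v ⬝ᵥ B *ᵥ r)| + ν₁ * |v ⬝ᵥ B *ᵥ w|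
      + |v ⬝ᵥ A *ᵥ w| := htri
    _ ≤ Real.sqrt (x ⬝ᵥ A *ᵥ x) *
          (Real.sqrt (v ⬝ᵥ A *ᵥ v) * Real.sqrt (r ⬝ᵥ A *ᵥ r) / νmin) +
        ν₁ / νmin * (Real.sqrt (v ⬝ᵥ A *ᵥ v) * (T * Real.sqrt (x ⬝ᵥ A *ᵥ x))) +
        Real.sqrt (νmax / νmin) *
          (Real.sqrt (v ⬝ᵥ A *ᵥ v) * (T * Real.sqrt (x ⬝ᵥ A *ᵥ x))) :=
      add_le_add (add_le_add hT1 hT2) hT3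
    _ = (Real.sqrt (r ⬝ᵥ A *ᵥ r) / νmin + (ν₁ / νmin + Real.sqrt (νmax / νmin)) * T) *
        (Real.sqrt (v ⬝ᵥ A *ᵥ v) * Real.sqrt (x ⬝ᵥ A *ᵥ x)) := heq
end
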